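/- Let x, y ∈ [0,1] and let z ∈ ℝ satisfy max(x+y−1, 0) ≤ z ≤ min(x, y). Then z is the value of a Frank t-norm at (x, y): either z = min(x, y), or z = x·y, or z = max(x+y−1, 0), or there exists λ ∈ (0, ∞) with λ ≠ 1 such that z = log(1 + (λˣ − 1)(λʸ − 1)/(λ − 1)) / log λ. -/

import Mathlib

open Real Filter Set Topology

noncomputable def frankF (x y l : ℝ) : ℝ :=
  Real.log (1 + (l ^ x - 1) * (l ^ y - 1) / (l - 1)) / Real.log l

section aux
variable {x y : ℝ} (hx0 : 0 < x) (hx1 : x < 1) (hy0 : 0 < y) (hy1 : y < 1)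

include hx0 hx1 hy0 hy1 in
lemma frank_arg_pos {l : ℝ} (hl : 0 < l) (hl1 : l ≠ 1) :
    0 < 1 + (l ^ x - 1) * (l ^ y - 1) / (l - 1) := by
  rcases lt_or_gt_of_ne hl1 with h | h
  · have hneg : l - 1 < 0 := by linarith
    have h1 : l < l ^ x := by
      have := Real.rpow_lt_rpow_of_exponent_gt hl h hx1
      rwa [Real.rpow_one] at this
    have h2 : l ^ y ≤ 1 := Real.rpow_le_one hl.le h.le hy0.le
    have h3 : (0:ℝ) ≤ 1 - l ^ x := by
      have : l ^ x ≤ 1 := Real.rpow_le_one hl.le h.le hx0.le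
      linarith
    have key : (l ^ x - 1) * (l ^ y - 1) < 1 - l := by
      have h4 : (0:ℝ) ≤ l ^ y := Real.rpow_nonneg hl.le y
      have : (1 - l ^ x) * (1 - l ^ y) ≤ (1 - l ^ x) * 1 :=
        mul_le_mul_of_nonneg_left (by linarith) h3
      nlinarith
    have : -1 < (l ^ x - 1) * (l ^ y - 1) / (l - 1) := by
      rw [lt_div_iff_of_neg hneg]
      nlinarith
    linarith
  · have h1 : 1 < l ^ x := Real.one_lt_rpow_iff_of_pos hl |>.2 (Or.inl ⟨h, hx0⟩)
    have h2 : 1 < l ^ y := Real.one_lt_rpow_iff_of_pos hl |>.2 (Or.inl ⟨h, hy0⟩)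
    have : 0 < (l ^ x - 1) * (l ^ y - 1) / (l - 1) := by
      apply div_pos (by nlinarith) (by linarith)
    linarith

include hx0 hx1 hy0 hy1 in
lemma frank_continuousAt {l : ℝ} (hl : 0 < l) (hl1 : l ≠ 1) :
    ContinuousAt (frankF x y) l := by
  have harg := frank_arg_pos hx0 hx1 hy0 hy1 hl hl1
  have c1 : ContinuousAt (fun t : ℝ => t ^ x) l :=
    Real.continuousAt_rpow_const l x (Or.inl hl.ne')
  have c2 : ContinuousAt (fun t : ℝ => t ^ y) l :=
    Real.continuousAt_rpow_const l y (Or.inl hl.ne')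
  have carg : ContinuousAt (fun t : ℝ => 1 + (t ^ x - 1) * (t ^ y - 1) / (t - 1)) l := by
    apply ContinuousAt.add continuousAt_const
    exact ((c1.sub continuousAt_const).mul (c2.sub continuousAt_const)).div
      ((continuousAt_id).sub continuousAt_const) (sub_ne_zero.2 hl1)
  have clog : ContinuousAt (fun t : ℝ => Real.log (1 + (t ^ x - 1) * (t ^ y - 1) / (t - 1))) l :=
    carg.log harg.ne'
  exact clog.div (Real.continuousAt_log hl.ne') (Real.log_ne_zero_of_pos_of_ne_one hl hl1)

end aux

section limits
variable {x y : ℝ} (hx0 : 0 < x) (hx1 : x < 1) (hy0 : 0 < y) (hy1 : y < 1)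

lemma slope_rpow (p : ℝ) (hp : p ≠ 0) :
    Tendsto (fun l : ℝ => (l ^ p - 1) / (l - 1)) (𝓝[≠] (1:ℝ)) (𝓝 p) := by
  have hd : HasDerivAt (fun t : ℝ => t ^ p) (p * (1:ℝ) ^ (p - 1)) 1 :=
    Real.hasDerivAt_rpow_const (Or.inl one_ne_zero)
  rw [Real.one_rpow, mul_one] at hd
  have := hasDerivAt_iff_tendsto_slope.1 hd
  refine this.congr' ?_
  filter_upwards [self_mem_nhdsWithin] with l hl
  simp [slope_def_field, Real.one_rpow]

lemma slope_log1 :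
    Tendsto (fun l : ℝ => Real.log l / (l - 1)) (𝓝[≠] (1:ℝ)) (𝓝 1) := by
  have hd : HasDerivAt Real.log 1 1 := by
    simpa using Real.hasDerivAt_log one_ne_zero
  have := hasDerivAt_iff_tendsto_slope.1 hd
  refine this.congr' ?_
  filter_upwards [self_mem_nhdsWithin] with l hl
  simp [slope_def_field, Real.log_one]

lemma slope_log0 :
    Tendsto (fun t : ℝ => Real.log (1 + t) / t) (𝓝[≠] (0:ℝ)) (𝓝 1) := by
  have hd : HasDerivAt (fun t : ℝ => Real.log (1 + t)) 1 0 := by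
    have h1 : HasDerivAt (fun t : ℝ => 1 + t) 1 0 := by
      simpa using (hasDerivAt_id (0:ℝ)).const_add 1
    have := (Real.hasDerivAt_log (by norm_num : (1:ℝ) + 0 ≠ 0)).comp 0 h1
    exact this.congr_deriv (by norm_num)
  have := hasDerivAt_iff_tendsto_slope.1 hd
  refine this.congr' ?_
  filter_upwards [self_mem_nhdsWithin] with t ht
  simp [slope_def_field, Real.log_one]

include hx0 hx1 hy0 hy1 in
lemma frank_tendsto_one :
    Tendsto (frankF x y) (𝓝[≠] (1:ℝ)) (𝓝 (x * y)) := by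
  set u : ℝ → ℝ := fun l => (l ^ x - 1) * (l ^ y - 1) / (l - 1) with hu
  -- eventually: l > 0, l ≠ 1, u l ≠ 0
  have hev : ∀ᶠ l in 𝓝[≠] (1:ℝ), 0 < l ∧ l ≠ 1 ∧ u l ≠ 0 := by
    have hpos : ∀ᶠ l in 𝓝[≠] (1:ℝ), 0 < l :=
      eventually_nhdsWithin_of_eventually_nhds (eventually_gt_nhds one_pos)
    filter_upwards [hpos, self_mem_nhdsWithin] with l hl hl1
    have hl1' : l ≠ 1 := hl1
    have hlog : Real.log l ≠ 0 := Real.log_ne_zero_of_pos_of_ne_one hl hl1'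
    have hlx : l ^ x ≠ 1 := by
      intro hcon
      have h0 : x * Real.log l = 0 := by
        rw [← Real.log_rpow hl, hcon, Real.log_one]
      rcases mul_eq_zero.1 h0 with h | h
      · exact hx0.ne' h
      · exact hlog h
    have hly : l ^ y ≠ 1 := by
      intro hcon
      have h0 : y * Real.log l = 0 := by
        rw [← Real.log_rpow hl, hcon, Real.log_one]
      rcases mul_eq_zero.1 h0 with h | h
      · exact hy0.ne' h
      · exact hlog h
    refine ⟨hl, hl1', ?_⟩
    apply div_ne_zero (mul_ne_zero (sub_ne_zero.2 hlx) (sub_ne_zero.2 hly)) (sub_ne_zero.2 hl1')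
  -- factor limits
  have hA : Tendsto (fun l : ℝ => ((l ^ x - 1) / (l - 1)) * ((l ^ y - 1) / (l - 1)))
      (𝓝[≠] (1:ℝ)) (𝓝 (x * y)) := (slope_rpow x hx0.ne').mul (slope_rpow y hy0.ne')
  have hd0 : Tendsto (fun l : ℝ => l - 1) (𝓝[≠] (1:ℝ)) (𝓝 0) := by
    have h : Tendsto (fun l : ℝ => l) (𝓝 (1:ℝ)) (𝓝 1) := tendsto_id
    have h2 := h.sub (tendsto_const_nhds (x := (1:ℝ)))
    rw [sub_self] at h2
    exact h2.mono_left nhdsWithin_le_nhds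
  have hu0 : Tendsto u (𝓝[≠] (1:ℝ)) (𝓝 0) := by
    have h := hA.mul hd0
    rw [mul_zero] at h
    refine h.congr' ?_
    filter_upwards [self_mem_nhdsWithin] with l hl
    have hd : l - 1 ≠ 0 := sub_ne_zero.2 hl
    simp only [hu]
    field_simp
  have hune : Tendsto u (𝓝[≠] (1:ℝ)) (𝓝[≠] (0:ℝ)) := by
    rw [tendsto_nhdsWithin_iff]
    exact ⟨hu0, by filter_upwards [hev] with l hl using hl.2.2⟩
  have hB : Tendsto (fun l : ℝ => Real.log (1 + u l) / u l) (𝓝[≠] (1:ℝ)) (𝓝 1) :=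
    slope_log0.comp hune
  have hC : Tendsto (fun l : ℝ => (l - 1) / Real.log l) (𝓝[≠] (1:ℝ)) (𝓝 1) := by
    have h := slope_log1.inv₀ one_ne_zero
    simpa [inv_div] using h
  have hmain := (hB.mul hA).mul hC
  rw [one_mul, mul_one] at hmain
  refine hmain.congr' ?_ |>.mono_left le_rfl
  filter_upwards [hev] with l hl
  obtain ⟨hlpos, hl1, hlu⟩ := hl
  have hd : l - 1 ≠ 0 := sub_ne_zero.2 hl1
  have hL : Real.log l ≠ 0 := Real.log_ne_zero_of_pos_of_ne_one hlpos hl1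
  have hxy : (l ^ x - 1) * (l ^ y - 1) ≠ 0 := by
    intro hcon
    apply hlu
    rw [hu]
    simp [hcon]
  show Real.log (1 + u l) / u l * ((l ^ x - 1) / (l - 1) * ((l ^ y - 1) / (l - 1))) *
      ((l - 1) / Real.log l) = frankF x y l
  have hueq : u l = (l ^ x - 1) * (l ^ y - 1) / (l - 1) := rfl
  unfold frankF
  rw [hueq]
  have hu' : (l ^ x - 1) * (l ^ y - 1) / (l - 1) ≠ 0 := div_ne_zero hxy hd
  generalize Real.log (1 + (l ^ x - 1) * (l ^ y - 1) / (l - 1)) = L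
  field_simp
  rw [mul_assoc]
  exact mul_div_cancel_right₀ L hxy

end limits

section limits2
variable {x y : ℝ} (hx0 : 0 < x) (hx1 : x < 1) (hy0 : 0 < y) (hy1 : y < 1)

lemma rpow_tendsto_zero_right {p : ℝ} (hp : 0 < p) :
    Tendsto (fun l : ℝ => l ^ p) (𝓝[>] (0:ℝ)) (𝓝 0) := by
  have h := (Real.continuousAt_rpow_const 0 p (Or.inr hp.le)).tendsto
  rw [Real.zero_rpow hp.ne'] at h
  exact h.mono_left nhdsWithin_le_nhds

lemma log_inv_tendsto_zero_right :
    Tendsto (fun l : ℝ => (Real.log l)⁻¹) (𝓝[>] (0:ℝ)) (𝓝 0) := by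
  have h1 : Tendsto (fun l : ℝ => -Real.log l) (𝓝[>] (0:ℝ)) atTop :=
    tendsto_neg_atBot_atTop.comp Real.tendsto_log_nhdsGT_zero
  have h2 := h1.inv_tendsto_atTop
  have h3 := h2.neg
  rw [neg_zero] at h3
  refine h3.congr fun l => ?_
  rw [Pi.inv_apply, inv_neg, neg_neg]

include hx0 hx1 hy0 hy1 in
lemma frank_tendsto_zero (hxy : x ≤ y) :
    Tendsto (frankF x y) (𝓝[>] (0:ℝ)) (𝓝 x) := by
  set M : ℝ → ℝ := fun l => l ^ y + l ^ (1 - x) - l ^ (y - x) - 1 with hM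
  set c : ℝ := if x = y then 2 else 1 with hc
  have hcpos : 0 < c := by rw [hc]; split <;> norm_num
  have hMlim : Tendsto M (𝓝[>] (0:ℝ)) (𝓝 (-c)) := by
    have t1 := rpow_tendsto_zero_right hy0
    have t2 := rpow_tendsto_zero_right (p := 1 - x) (by linarith)
    rcases eq_or_lt_of_le hxy with heq | hlt
    · have hMeq : M = fun l => l ^ y + l ^ (1 - x) - 1 - 1 := by
        funext l
        simp only [hM, ← heq, sub_self, Real.rpow_zero]
      rw [hMeq, hc, if_pos heq]
      have h4 : Tendsto (fun l : ℝ => l ^ y + l ^ (1 - x) - 1 - 1) (𝓝[>] (0:ℝ))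
          (𝓝 ((0:ℝ) + 0 - 1 - 1)) :=
        ((t1.add t2).sub tendsto_const_nhds).sub tendsto_const_nhds
      norm_num at h4
      exact h4
    · have t3 := rpow_tendsto_zero_right (p := y - x) (by linarith)
      rw [hc, if_neg hlt.ne]
      have h4 : Tendsto M (𝓝[>] (0:ℝ)) (𝓝 ((0:ℝ) + 0 - 0 - 1)) :=
        ((t1.add t2).sub t3).sub tendsto_const_nhds
      norm_num at h4
      exact h4
  have hdlim : Tendsto (fun l : ℝ => l - 1) (𝓝[>] (0:ℝ)) (𝓝 (-1)) := by
    have h : Tendsto (fun l : ℝ => l) (𝓝 (0:ℝ)) (𝓝 0) := tendsto_id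
    have h2 := h.sub (tendsto_const_nhds (x := (1:ℝ)))
    rw [zero_sub] at h2
    exact h2.mono_left nhdsWithin_le_nhds
  have hfrac : Tendsto (fun l : ℝ => M l / (l - 1)) (𝓝[>] (0:ℝ)) (𝓝 c) := by
    have h := hMlim.div hdlim (by norm_num)
    rw [neg_div_neg_eq, div_one] at h
    exact h
  have hloglim : Tendsto (fun l : ℝ => Real.log (M l / (l - 1))) (𝓝[>] (0:ℝ))
      (𝓝 (Real.log c)) := (Real.continuousAt_log hcpos.ne').tendsto.comp hfrac
  have hmain : Tendsto (fun l : ℝ => x + Real.log (M l / (l - 1)) * (Real.log l)⁻¹)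
      (𝓝[>] (0:ℝ)) (𝓝 x) := by
    have h := (tendsto_const_nhds (x := x)).add (hloglim.mul log_inv_tendsto_zero_right)
    simpa using h
  refine hmain.congr' ?_
  have hev : ∀ᶠ l in 𝓝[>] (0:ℝ), l ∈ Ioo (0:ℝ) 1 :=
    Ioo_mem_nhdsGT_of_mem ⟨le_refl 0, one_pos⟩
  filter_upwards [hev] with l hl
  obtain ⟨hl0, hl1⟩ := hl
  have hl1' : l ≠ 1 := hl1.ne
  have hd : l - 1 ≠ 0 := by intro h; apply hl1'; linarith
  have hL : Real.log l ≠ 0 := Real.log_ne_zero_of_pos_of_ne_one hl0 hl1'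
  have hlx : (0:ℝ) < l ^ x := Real.rpow_pos_of_pos hl0 x
  have e1 : l ^ x * l ^ (1 - x) = l := by
    rw [← Real.rpow_add hl0]; norm_num
  have e2 : l ^ x * l ^ (y - x) = l ^ y := by
    rw [← Real.rpow_add hl0]; ring_nf
  have key : 1 + (l ^ x - 1) * (l ^ y - 1) / (l - 1) = l ^ x * (M l / (l - 1)) := by
    rw [hM]
    field_simp
    nlinarith [e1, e2]
  have hargpos := frank_arg_pos hx0 hx1 hy0 hy1 hl0 hl1'
  have hMd : 0 < M l / (l - 1) := by
    rw [key] at hargpos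
    by_contra h
    push_neg at h
    nlinarith
  show x + Real.log (M l / (l - 1)) * (Real.log l)⁻¹ = frankF x y l
  unfold frankF
  rw [key, Real.log_mul hlx.ne' hMd.ne', Real.log_rpow hl0]
  field_simp

end limits2

section limits3
variable {x y : ℝ} (hx0 : 0 < x) (hx1 : x < 1) (hy0 : 0 < y) (hy1 : y < 1)

lemma rpow_tendsto_zero_atTop {p : ℝ} (hp : p < 0) :
    Tendsto (fun l : ℝ => l ^ p) atTop (𝓝 0) := by
  have h := tendsto_rpow_neg_atTop (y := -p) (by linarith)
  simpa using h

lemma log_inv_tendsto_zero_atTop :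
    Tendsto (fun l : ℝ => (Real.log l)⁻¹) atTop (𝓝 0) :=
  Real.tendsto_log_atTop.inv_tendsto_atTop

lemma log_ratio_tendsto_one :
    Tendsto (fun l : ℝ => Real.log (l - 1) * (Real.log l)⁻¹) atTop (𝓝 1) := by
  have hsmall : Tendsto (fun l : ℝ => Real.log (1 - l⁻¹)) atTop (𝓝 0) := by
    have h1 : Tendsto (fun l : ℝ => 1 - l⁻¹) atTop (𝓝 1) := by
      have := (tendsto_const_nhds (x := (1:ℝ))).sub tendsto_inv_atTop_zero
      simpa using this
    have h2 := (Real.continuousAt_log one_ne_zero).tendsto.comp h1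
    rwa [Real.log_one] at h2
  have hmain : Tendsto (fun l : ℝ => 1 + Real.log (1 - l⁻¹) * (Real.log l)⁻¹)
      atTop (𝓝 1) := by
    have h := (tendsto_const_nhds (x := (1:ℝ))).add (hsmall.mul log_inv_tendsto_zero_atTop)
    simpa using h
  refine hmain.congr' ?_
  filter_upwards [eventually_gt_atTop (1:ℝ)] with l hl
  have hl0 : (0:ℝ) < l := by linarith
  have hL : Real.log l ≠ 0 := Real.log_ne_zero_of_pos_of_ne_one hl0 (by linarith)
  have hinv : l⁻¹ < 1 := by
    rw [inv_lt_one_iff₀]; right; exact hl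
  have heq : l - 1 = l * (1 - l⁻¹) := by field_simp
  rw [heq, Real.log_mul hl0.ne' (by linarith)]
  field_simp

include hx0 hx1 hy0 hy1 in
lemma frank_decomp_atTop (m : ℝ) (R : ℝ → ℝ) (c' : ℝ) (hc' : 0 < c')
    (hR : Tendsto R atTop (𝓝 c'))
    (hid : ∀ᶠ l in atTop, 1 + (l ^ x - 1) * (l ^ y - 1) / (l - 1) = l ^ m * R l / (l - 1)) :
    Tendsto (frankF x y) atTop (𝓝 (m - 1)) := by
  have hRpos : ∀ᶠ l in atTop, 0 < R l := hR.eventually (eventually_gt_nhds hc')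
  have hlogR : Tendsto (fun l : ℝ => Real.log (R l)) atTop (𝓝 (Real.log c')) :=
    (Real.continuousAt_log hc'.ne').tendsto.comp hR
  have hmain : Tendsto
      (fun l : ℝ => m + Real.log (R l) * (Real.log l)⁻¹ - Real.log (l - 1) * (Real.log l)⁻¹)
      atTop (𝓝 (m - 1)) := by
    have h := ((tendsto_const_nhds (x := m)).add
      (hlogR.mul log_inv_tendsto_zero_atTop)).sub log_ratio_tendsto_one
    simpa using h
  refine hmain.congr' ?_
  filter_upwards [eventually_gt_atTop (1:ℝ), hid, hRpos] with l hl hidl hRl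
  have hl0 : (0:ℝ) < l := by linarith
  have hl1 : l ≠ 1 := by linarith
  have hd : (0:ℝ) < l - 1 := by linarith
  have hL : Real.log l ≠ 0 := Real.log_ne_zero_of_pos_of_ne_one hl0 hl1
  have hlm : (0:ℝ) < l ^ m := Real.rpow_pos_of_pos hl0 m
  show m + Real.log (R l) * (Real.log l)⁻¹ - Real.log (l - 1) * (Real.log l)⁻¹ = frankF x y l
  unfold frankF
  rw [hidl, Real.log_div (mul_ne_zero hlm.ne' hRl.ne') hd.ne',
    Real.log_mul hlm.ne' hRl.ne', Real.log_rpow hl0]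
  field_simp

include hx0 hx1 hy0 hy1 in
lemma frank_tendsto_atTop :
    Tendsto (frankF x y) atTop (𝓝 (max (x + y - 1) 0)) := by
  rcases le_or_gt (x + y) 1 with hxy | hxy
  · -- m = 1
    rw [max_eq_right (by linarith)]
    set R : ℝ → ℝ := fun l => l ^ (x + y - 1) - l ^ (x - 1) - l ^ (y - 1) + 1 with hRdef
    set c' : ℝ := if x + y = 1 then 2 else 1 with hc'def
    have hc' : 0 < c' := by rw [hc'def]; split <;> norm_num
    have hR : Tendsto R atTop (𝓝 c') := by
      have t1 := rpow_tendsto_zero_atTop (p := x - 1) (by linarith)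
      have t2 := rpow_tendsto_zero_atTop (p := y - 1) (by linarith)
      rcases eq_or_lt_of_le hxy with heq | hlt
      · have hReq : R = fun l => 1 - l ^ (x - 1) - l ^ (y - 1) + 1 := by
          funext l
          simp only [hRdef, heq, sub_self, Real.rpow_zero]
        rw [hReq, hc'def, if_pos heq]
        have h4 : Tendsto (fun l : ℝ => 1 - l ^ (x - 1) - l ^ (y - 1) + 1) atTop
            (𝓝 ((1:ℝ) - 0 - 0 + 1)) :=
          ((tendsto_const_nhds.sub t1).sub t2).add tendsto_const_nhds
        norm_num at h4
        exact h4
      · have t3 := rpow_tendsto_zero_atTop (p := x + y - 1) (by linarith)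
        rw [hc'def, if_neg hlt.ne]
        have h4 : Tendsto R atTop (𝓝 ((0:ℝ) - 0 - 0 + 1)) :=
          ((t3.sub t1).sub t2).add tendsto_const_nhds
        norm_num at h4
        exact h4
    have hid : ∀ᶠ l in atTop, 1 + (l ^ x - 1) * (l ^ y - 1) / (l - 1)
        = l ^ (1:ℝ) * R l / (l - 1) := by
      filter_upwards [eventually_gt_atTop (1:ℝ)] with l hl
      have hl0 : (0:ℝ) < l := by linarith
      have hd : l - 1 ≠ 0 := by intro h; linarith [sub_eq_zero.1 h]
      have e0 : l ^ x * l ^ y = l ^ (x + y) := (Real.rpow_add hl0 x y).symm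
      have e1 : l ^ (1:ℝ) * l ^ (x + y - 1) = l ^ (x + y) := by
        rw [← Real.rpow_add hl0]; ring_nf
      have e2 : l ^ (1:ℝ) * l ^ (x - 1) = l ^ x := by
        rw [← Real.rpow_add hl0]; ring_nf
      have e3 : l ^ (1:ℝ) * l ^ (y - 1) = l ^ y := by
        rw [← Real.rpow_add hl0]; ring_nf
      rw [Real.rpow_one] at e1 e2 e3
      rw [hRdef]
      rw [Real.rpow_one]
      field_simp
      nlinarith [e0, e1, e2, e3]
    have h := frank_decomp_atTop hx0 hx1 hy0 hy1 1 R c' hc' hR hid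
    simpa using h
  · -- m = x + y
    rw [max_eq_left (by linarith)]
    set R : ℝ → ℝ := fun l => 1 - l ^ (-x) - l ^ (-y) + l ^ (1 - x - y) with hRdef
    have hR : Tendsto R atTop (𝓝 1) := by
      have t1 := rpow_tendsto_zero_atTop (p := -x) (by linarith)
      have t2 := rpow_tendsto_zero_atTop (p := -y) (by linarith)
      have t3 := rpow_tendsto_zero_atTop (p := 1 - x - y) (by linarith)
      have h4 : Tendsto R atTop (𝓝 ((1:ℝ) - 0 - 0 + 0)) :=
        ((tendsto_const_nhds.sub t1).sub t2).add t3
      norm_num at h4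
      exact h4
    have hid : ∀ᶠ l in atTop, 1 + (l ^ x - 1) * (l ^ y - 1) / (l - 1)
        = l ^ (x + y) * R l / (l - 1) := by
      filter_upwards [eventually_gt_atTop (1:ℝ)] with l hl
      have hl0 : (0:ℝ) < l := by linarith
      have hd : l - 1 ≠ 0 := by intro h; linarith [sub_eq_zero.1 h]
      have e0 : l ^ x * l ^ y = l ^ (x + y) := (Real.rpow_add hl0 x y).symm
      have e1 : l ^ (x + y) * l ^ (-x) = l ^ y := by
        rw [← Real.rpow_add hl0]; ring_nf
      have e2 : l ^ (x + y) * l ^ (-y) = l ^ x := by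
        rw [← Real.rpow_add hl0]; ring_nf
      have e3 : l ^ (x + y) * l ^ (1 - x - y) = l ^ (1:ℝ) := by
        rw [← Real.rpow_add hl0]; ring_nf
      rw [Real.rpow_one] at e3
      rw [hRdef]
      field_simp
      nlinarith [e0, e1, e2, e3]
    exact frank_decomp_atTop hx0 hx1 hy0 hy1 (x + y) R 1 one_pos hR hid

end limits3

lemma frank_key {x y : ℝ} (hx0 : 0 < x) (hx1 : x < 1) (hy0 : 0 < y) (hy1 : y < 1)
    (hxy : x ≤ y) (z : ℝ) (h1 : max (x + y - 1) 0 ≤ z) (h2 : z ≤ min x y) :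
    z = min x y ∨ z = x * y ∨ z = max (x + y - 1) 0 ∨
      ∃ l : ℝ, 0 < l ∧ l ≠ 1 ∧
        z = Real.log (1 + (l ^ x - 1) * (l ^ y - 1) / (l - 1)) / Real.log l := by
  have hmin : min x y = x := min_eq_left hxy
  by_cases hz1 : z = min x y
  · exact Or.inl hz1
  by_cases hz2 : z = x * y
  · exact Or.inr (Or.inl hz2)
  by_cases hz3 : z = max (x + y - 1) 0
  · exact Or.inr (Or.inr (Or.inl hz3))
  refine Or.inr (Or.inr (Or.inr ?_))
  have htone := frank_tendsto_one hx0 hx1 hy0 hy1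
  rcases lt_trichotomy z (x * y) with h | h | h
  · -- z ∈ Ioo (max) (x*y), use λ ∈ (1, ∞)
    have hzmax : max (x + y - 1) 0 < z := lt_of_le_of_ne h1 (Ne.symm hz3)
    have hs : Ioo (max (x + y - 1) 0) (x * y) ⊆ frankF x y '' Ioi 1 := by
      refine (isPreconnected_Ioi (a := (1:ℝ))).intermediate_value_Ioo
        (l₁ := atTop) (l₂ := 𝓝[>] (1:ℝ)) ?_ ?_ ?_
        (frank_tendsto_atTop hx0 hx1 hy0 hy1) ?_
      · exact le_principal_iff.2 (Ioi_mem_atTop 1)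
      · exact le_principal_iff.2 self_mem_nhdsWithin
      · exact fun l hl =>
          (frank_continuousAt hx0 hx1 hy0 hy1 (lt_trans one_pos hl) (ne_of_gt hl)).continuousWithinAt
      · exact htone.mono_left (nhdsWithin_mono _ fun a ha => ne_of_gt ha)
    obtain ⟨l, hlmem, hfl⟩ := hs ⟨hzmax, h⟩
    exact ⟨l, lt_trans one_pos hlmem, (ne_of_gt hlmem), hfl.symm⟩
  · exact absurd h hz2
  · -- z ∈ Ioo (x*y) x, use λ ∈ (0, 1)
    have hzx : z < x := by
      rcases lt_or_eq_of_le h2 with h' | h'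
      · rwa [hmin] at h'
      · exact absurd h' hz1
    have hs : Ioo (x * y) x ⊆ frankF x y '' Ioo 0 1 := by
      refine (isPreconnected_Ioo (a := (0:ℝ)) (b := 1)).intermediate_value_Ioo
        (l₁ := 𝓝[<] (1:ℝ)) (l₂ := 𝓝[>] (0:ℝ)) ?_ ?_ ?_ ?_
        (frank_tendsto_zero hx0 hx1 hy0 hy1 hxy)
      · exact le_principal_iff.2 (Ioo_mem_nhdsLT_of_mem ⟨one_pos, le_refl 1⟩)
      · exact le_principal_iff.2 (Ioo_mem_nhdsGT_of_mem ⟨le_refl 0, one_pos⟩)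
      · exact fun l hl =>
          (frank_continuousAt hx0 hx1 hy0 hy1 hl.1 hl.2.ne).continuousWithinAt
      · exact htone.mono_left (nhdsWithin_mono _ fun a ha => ne_of_lt ha)
    obtain ⟨l, hlmem, hfl⟩ := hs ⟨h, hzx⟩
    exact ⟨l, hlmem.1, hlmem.2.ne, hfl.symm⟩

/-- Any coherent prevision `z` of the conjunction of two conditional events,
    i.e. any `z` with `max(x+y−1,0) ≤ z ≤ min(x,y)`, is the value of a Frank
    t-norm `T_λ` at `(x,y)` for some `λ ∈ [0,+∞]`. -/
theorem frank_tnorm_representation (x y z : ℝ)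
    (hx : x ∈ Set.Icc (0 : ℝ) 1) (hy : y ∈ Set.Icc (0 : ℝ) 1)
    (h1 : max (x + y - 1) 0 ≤ z) (h2 : z ≤ min x y) :
    z = min x y ∨ z = x * y ∨ z = max (x + y - 1) 0 ∨
      ∃ l : ℝ, 0 < l ∧ l ≠ 1 ∧
        z = Real.log (1 + (l ^ x - 1) * (l ^ y - 1) / (l - 1)) / Real.log l := by
  obtain ⟨hx0, hx1⟩ := hx
  obtain ⟨hy0, hy1⟩ := hy
  rcases eq_or_lt_of_le hx0 with h0 | hx0'
  · -- x = 0
    left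
    have hmx : min x y = x := min_eq_left (by rw [← h0]; exact hy0)
    have : z ≤ 0 := by rw [hmx, ← h0] at h2; exact h2
    have : 0 ≤ z := le_trans (le_max_right _ _) h1
    rw [hmx, ← h0]
    linarith
  rcases eq_or_lt_of_le hy0 with h0 | hy0'
  · left
    have hmx : min x y = y := min_eq_right (by rw [← h0]; exact hx0)
    have : z ≤ 0 := by rw [hmx, ← h0] at h2; exact h2
    have : 0 ≤ z := le_trans (le_max_right _ _) h1
    rw [hmx, ← h0]
    linarith
  rcases eq_or_lt_of_le hx1 with h0 | hx1'
  · -- x = 1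
    left
    have hmx : min x y = y := min_eq_right (by rw [h0]; exact hy1)
    have hmax : max (x + y - 1) 0 = y := by
      rw [h0]; rw [max_eq_left (by linarith)]; ring
    rw [hmax] at h1
    rw [hmx] at h2 ⊢
    linarith
  rcases eq_or_lt_of_le hy1 with h0 | hy1'
  · left
    have hmx : min x y = x := min_eq_left (by rw [h0]; exact hx1)
    have hmax : max (x + y - 1) 0 = x := by
      rw [h0]; rw [max_eq_left (by linarith)]; ring
    rw [hmax] at h1
    rw [hmx] at h2 ⊢
    linarith
  rcases le_total x y with hxy | hxy
  · exact frank_key hx0' hx1' hy0' hy1' hxy z h1 h2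
  · have h1' : max (y + x - 1) 0 ≤ z := by rwa [add_comm y x]
    have h2' : z ≤ min y x := by rwa [min_comm y x]
    rcases frank_key hy0' hy1' hx0' hx1' hxy z h1' h2' with h | h | h | ⟨l, hl, hl1, he⟩
    · left; rwa [min_comm y x] at h
    · right; left; rwa [mul_comm y x] at h
    · right; right; left; rwa [add_comm y x] at h
    · refine Or.inr (Or.inr (Or.inr ⟨l, hl, hl1, ?_⟩))
      rwa [mul_comm (l ^ y - 1) (l ^ x - 1)] at he
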